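/- Let g = g_{5,3,4} and let F = (α, β, γ, δ, σ) ∈ g*. Then: (1) if γ = δ = σ = 0 then Ω_F = {F}; (2) if γ = δ = 0, σ ≠ 0 then Ω_F = {(α, y, 0, 0, s) : y ∈ ℝ, σs > 0}; (3) if γ = 0, δ ≠ 0, σ = 0 then Ω_F = {(α, y, 0, t, 0) : y ∈ ℝ, δt > 0}; (4) if γ = 0, δ ≠ 0, σ ≠ 0 then Ω_F = {(α, y, 0, t, s) : y ∈ ℝ, δt > 0, δs = σt}; (5) if γ ≠ 0, δ = σ = 0 then Ω_F = {(x, y, z, 0, 0) : y ∈ ℝ, γz > 0, x = α + γ − z}; (6) if γ ≠ 0, δ = 0, σ ≠ 0 then Ω_F = {(x, y, z, 0, s) : y ∈ ℝ, σs > 0, x = α + γ − z and x = α + γ(1 − s/σ)}; (7) if γ ≠ 0, δ ≠ 0, σ = 0 then Ω_F = {(x, y, z, t, 0) : y ∈ ℝ, δt > 0, x = α + γ − z, z = γ·t/δ}; (8) if γ ≠ 0, δ ≠ 0, σ ≠ 0 then Ω_F = {(x, y, z, t, s) : y ∈ ℝ, δt > 0, x = α + γ − z, x = α + γ(1 − s/σ),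 σt = δs}. -/

import Mathlib

open Nat

attribute [local instance] Matrix.linftyOpNormedRing Matrix.linftyOpNormedAlgebra

noncomputable def Sg (b : ℝ) : ℝ := ∑' n : ℕ, b ^ n / (n + 1)!

lemma Sg_summable (b : ℝ) : Summable (fun n : ℕ => b ^ n / ((n + 1)! : ℝ)) := by
  refine Summable.of_norm_bounded (Real.summable_pow_div_factorial |b|) fun n => ?_
  rw [Real.norm_eq_abs, abs_div, abs_pow, Nat.abs_cast]
  gcongr
  omega

lemma exp_eq_one_add_Sg (b : ℝ) : Real.exp b = 1 + b * Sg b := by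
  have hsum : Summable (fun n : ℕ => b ^ n / (n ! : ℝ)) := Real.summable_pow_div_factorial b
  have h1 : Real.exp b = ∑' n : ℕ, b ^ n / n ! := by
    rw [Real.exp_eq_exp_ℝ, NormedSpace.exp_eq_tsum_div]
  rw [h1, Summable.tsum_eq_zero_add hsum]
  congr 1
  · simp
  · rw [Sg, ← tsum_mul_left]
    congr 1; funext n
    rw [pow_succ]
    field_simp

lemma Sg_ne_zero (b : ℝ) : Sg b ≠ 0 := by
  by_cases hb : b = 0
  · subst hb
    have : Sg 0 = 1 := by
      rw [Sg, tsum_eq_single 0 (by intro n hn; simp [zero_pow hn])]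
      norm_num
    rw [this]; norm_num
  · intro h
    have h2 := exp_eq_one_add_Sg b
    rw [h, mul_zero, add_zero, ← Real.exp_zero] at h2
    exact hb (Real.exp_eq_exp.mp h2)



/-- The Lie bracket of g_{5,3,4}: [X1,X2] = X3, [X2,X3] = X3, [X2,X4] = X4, [X2,X5] = X5,
written in coordinates with respect to the basis (X₁, X₂, X₃, X₄, X₅) (all other
brackets of basis vectors vanish); it is the bilinear extension of the structure
constants above. -/
def bracketg534 (U V : Fin 5 → ℝ) : Fin 5 → ℝ :=
  ![0, 0,
    (U 0 * V 1 - U 1 * V 0) + (U 1 * V 2 - U 2 * V 1),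
    U 1 * V 3 - U 3 * V 1,
    U 1 * V 4 - U 4 * V 1]

/-- The matrix of the adjoint endomorphism ad_U = [U, ·] in the basis (X₁, ..., X₅):
column j holds the coordinates of [U, Xⱼ]. -/
def adg534 (U : Fin 5 → ℝ) : Matrix (Fin 5) (Fin 5) ℝ :=
  Matrix.of fun i j => bracketg534 U (Pi.single j 1) i

/-- The orbit Ω_F = { F ∘ exp(ad_U) : U ∈ g } in coordinates with respect to the dual
basis: a functional F' is identified with the vector (F'(X₁), ..., F'(X₅)), so that
F ∘ exp(ad_U) corresponds to the row-vector–matrix product vecMul F (exp (ad_U)). -/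
noncomputable def orbitg534 (F : Fin 5 → ℝ) : Set (Fin 5 → ℝ) :=
  Set.range fun U : Fin 5 → ℝ => Matrix.vecMul F (NormedSpace.exp (adg534 U))

lemma adg534_eq (U : Fin 5 → ℝ) :
    adg534 U = !![0,0,0,0,0; 0,0,0,0,0;
      -(U 1), U 0 - U 2, U 1, 0, 0;
      0, -(U 3), 0, U 1, 0;
      0, -(U 4), 0, 0, U 1] := by
  ext i j
  fin_cases i <;> fin_cases j <;>
    simp [adg534, bracketg534, Pi.single_apply] <;>
    first
      | ring1
      | (intro h; omega)
      | (intro h; exact absurd h (by decide))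
      | (intro h; exact absurd (by decide) h)
      | decide

lemma adg534_sq (U : Fin 5 → ℝ) : adg534 U * adg534 U = (U 1) • adg534 U := by
  rw [adg534_eq]
  ext i j
  fin_cases i <;> fin_cases j <;>
    simp [Matrix.mul_apply, Fin.sum_univ_five] <;> ring

lemma exp_adg534 (U : Fin 5 → ℝ) :
    NormedSpace.exp (adg534 U) = 1 + Sg (U 1) • adg534 U := by
  set M := adg534 U with hM
  have h : M * M = (U 1) • M := adg534_sq U
  have hpow : ∀ n : ℕ, M ^ (n + 1) = (U 1) ^ n • M := by
    intro n; induction n with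
    | zero => simp
    | succ n ih => rw [pow_succ, ih, smul_mul_assoc, h, smul_smul, ← pow_succ]
  rw [NormedSpace.exp_eq_tsum (𝕂 := ℝ)]
  show (∑' n : ℕ, ((n ! : ℝ))⁻¹ • M ^ n) = 1 + Sg (U 1) • M
  have hsum : Summable (fun n : ℕ => ((n !:ℝ))⁻¹ • M ^ n) :=
    NormedSpace.expSeries_summable' (𝕂 := ℝ) M
  rw [Summable.tsum_eq_zero_add hsum]
  congr 1
  · simp
  · have : ∀ n : ℕ, (((n+1)! : ℝ))⁻¹ • M ^ (n+1) = ((U 1) ^ n / (n+1)!) • M := by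
      intro n
      rw [hpow n, smul_smul, div_eq_inv_mul]
    simp only [this]
    rw [Summable.tsum_smul_const (Sg_summable (U 1))]
    rfl

lemma vecMul_exp_adg534 (α β γ δ σ : ℝ) (U : Fin 5 → ℝ) :
    Matrix.vecMul ![α, β, γ, δ, σ] (NormedSpace.exp (adg534 U)) =
      ![α + γ - γ * Real.exp (U 1),
        β + Sg (U 1) * (γ * (U 0 - U 2) - δ * U 3 - σ * U 4),
        γ * Real.exp (U 1), δ * Real.exp (U 1), σ * Real.exp (U 1)] := by
  rw [exp_adg534, Matrix.vecMul_add, Matrix.vecMul_one, adg534_eq]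
  have he := exp_eq_one_add_Sg (U 1)
  ext j
  fin_cases j <;>
    simp [Matrix.vecMul, dotProduct, Fin.sum_univ_five, Matrix.smul_apply, he] <;> ring

lemma sign_div_pos {a b : ℝ} (h : 0 < a * b) : 0 < b / a := by
  have ha : a ≠ 0 := by rintro rfl; simp at h
  have h2 : b / a = (a * b) / (a * a) := by field_simp
  rw [h2]; exact div_pos h (mul_self_pos.mpr ha)

lemma Sg_cancel (b y β : ℝ) : β + Sg b * ((y - β) / Sg b) = y := by
  rw [mul_div_cancel₀ _ (Sg_ne_zero b)]; ring

lemma exists_U (γ δ σ b c : ℝ) (hc : γ = 0 ∧ δ = 0 ∧ σ = 0 → c = 0) :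
    ∃ U : Fin 5 → ℝ, U 1 = b ∧ γ * (U 0 - U 2) - δ * U 3 - σ * U 4 = c := by
  by_cases hγ : γ = 0
  · by_cases hδ : δ = 0
    · by_cases hσ : σ = 0
      · exact ⟨![0, b, 0, 0, 0], by simp, by simp [hγ, hδ, hσ, hc ⟨hγ, hδ, hσ⟩]⟩
      · refine ⟨![0, b, 0, 0, -c/σ], by simp, ?_⟩
        simp [hγ, hδ]
        field_simp
    · refine ⟨![0, b, 0, -c/δ, 0], by simp, ?_⟩
      simp [hγ]
      field_simp
  · refine ⟨![c/γ, b, 0, 0, 0], by simp, ?_⟩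
    simp
    field_simp

lemma mem_orbit_iff (α β γ δ σ : ℝ) (p : Fin 5 → ℝ) :
    p ∈ orbitg534 ![α, β, γ, δ, σ] ↔
      ∃ b c : ℝ, (γ = 0 ∧ δ = 0 ∧ σ = 0 → c = 0) ∧
        p = ![α + γ - γ * Real.exp b, β + Sg b * c,
              γ * Real.exp b, δ * Real.exp b, σ * Real.exp b] := by
  constructor
  · rintro ⟨U, rfl⟩
    exact ⟨U 1, γ * (U 0 - U 2) - δ * U 3 - σ * U 4,
      fun h => by rw [h.1, h.2.1, h.2.2]; ring,
      vecMul_exp_adg534 α β γ δ σ U⟩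
  · rintro ⟨b, c, hc, rfl⟩
    obtain ⟨U, hU1, hUc⟩ := exists_U γ δ σ b c hc
    refine ⟨U, ?_⟩
    show Matrix.vecMul ![α, β, γ, δ, σ] (NormedSpace.exp (adg534 U)) = _
    rw [vecMul_exp_adg534, hU1, hUc]


theorem kOrbits_g534 (α β γ δ σ : ℝ) :
    (γ = 0 → δ = 0 → σ = 0 → orbitg534 ![α, β, γ, δ, σ] = {![α, β, γ, δ, σ]}) ∧
    (γ = 0 → δ = 0 → σ ≠ 0 → orbitg534 ![α, β, γ, δ, σ] = {p | ∃ y s : ℝ, σ * s > 0 ∧ p = ![α, y, 0, 0, s]}) ∧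
    (γ = 0 → δ ≠ 0 → σ = 0 → orbitg534 ![α, β, γ, δ, σ] = {p | ∃ y t : ℝ, δ * t > 0 ∧ p = ![α, y, 0, t, 0]}) ∧
    (γ = 0 → δ ≠ 0 → σ ≠ 0 → orbitg534 ![α, β, γ, δ, σ] = {p | ∃ y t s : ℝ, δ * t > 0 ∧ δ * s = σ * t ∧ p = ![α, y, 0, t, s]}) ∧
    (γ ≠ 0 → δ = 0 → σ = 0 → orbitg534 ![α, β, γ, δ, σ] = {p | ∃ x y z : ℝ, γ * z > 0 ∧ x = α + γ - z ∧ p = ![x, y, z, 0, 0]}) ∧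
    (γ ≠ 0 → δ = 0 → σ ≠ 0 → orbitg534 ![α, β, γ, δ, σ] = {p | ∃ x y z s : ℝ, σ * s > 0 ∧ x = α + γ - z ∧ x = α + γ * (1 - s / σ) ∧ p = ![x, y, z, 0, s]}) ∧
    (γ ≠ 0 → δ ≠ 0 → σ = 0 → orbitg534 ![α, β, γ, δ, σ] = {p | ∃ x y z t : ℝ, δ * t > 0 ∧ x = α + γ - z ∧ z = γ * t / δ ∧ p = ![x, y, z, t, 0]}) ∧
    (γ ≠ 0 → δ ≠ 0 → σ ≠ 0 → orbitg534 ![α, β, γ, δ, σ] = {p | ∃ x y z t s : ℝ, δ * t > 0 ∧ x = α + γ - z ∧ x = α + γ * (1 - s / σ) ∧ σ * t = δ * s ∧ p = ![x, y, z, t, s]}) := by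
  refine ⟨?_, ?_, ?_, ?_, ?_, ?_, ?_, ?_⟩
  -- Case 1
  · intro hγ hδ hσ; subst hγ; subst hδ; subst hσ
    ext p
    simp only [mem_orbit_iff, Set.mem_singleton_iff]
    constructor
    · rintro ⟨b, c, hc, rfl⟩
      have hc0 : c = 0 := hc (by simp)
      subst hc0
      funext j; fin_cases j <;> norm_num
    · rintro rfl
      exact ⟨0, 0, fun _ => rfl, by funext j; fin_cases j <;> norm_num⟩
  -- Case 2
  · intro hγ hδ hσ; subst hγ; subst hδ
    ext p
    simp only [mem_orbit_iff, Set.mem_setOf_eq]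
    constructor
    · rintro ⟨b, c, hc, rfl⟩
      refine ⟨β + Sg b * c, σ * Real.exp b, ?_, ?_⟩
      · have h1 : σ * (σ * Real.exp b) = (σ * σ) * Real.exp b := by ring
        rw [h1]; exact mul_pos (mul_self_pos.mpr hσ) (Real.exp_pos b)
      · funext j; fin_cases j <;> norm_num
    · rintro ⟨y, s, hs, rfl⟩
      set b := Real.log (s / σ) with hb
      have hE : Real.exp b = s / σ := Real.exp_log (sign_div_pos hs)
      have hσs : σ * Real.exp b = s := by rw [hE]; field_simp
      refine ⟨b, (y - β) / Sg b, fun h => absurd h.2.2 hσ, ?_⟩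
      funext j; fin_cases j <;> simp [hσs, Sg_cancel]
  -- Case 3
  · intro hγ hδ hσ; subst hγ; subst hσ
    ext p
    simp only [mem_orbit_iff, Set.mem_setOf_eq]
    constructor
    · rintro ⟨b, c, hc, rfl⟩
      refine ⟨β + Sg b * c, δ * Real.exp b, ?_, ?_⟩
      · have h1 : δ * (δ * Real.exp b) = (δ * δ) * Real.exp b := by ring
        rw [h1]; exact mul_pos (mul_self_pos.mpr hδ) (Real.exp_pos b)
      · funext j; fin_cases j <;> norm_num
    · rintro ⟨y, t, ht, rfl⟩
      set b := Real.log (t / δ) with hb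
      have hE : Real.exp b = t / δ := Real.exp_log (sign_div_pos ht)
      have hδt : δ * Real.exp b = t := by rw [hE]; field_simp
      refine ⟨b, (y - β) / Sg b, fun h => absurd h.2.1 hδ, ?_⟩
      funext j; fin_cases j <;> simp [hδt, Sg_cancel]
  -- Case 4
  · intro hγ hδ hσ; subst hγ
    ext p
    simp only [mem_orbit_iff, Set.mem_setOf_eq]
    constructor
    · rintro ⟨b, c, hc, rfl⟩
      refine ⟨β + Sg b * c, δ * Real.exp b, σ * Real.exp b, ?_, by ring, ?_⟩
      · have h1 : δ * (δ * Real.exp b) = (δ * δ) * Real.exp b := by ring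
        rw [h1]; exact mul_pos (mul_self_pos.mpr hδ) (Real.exp_pos b)
      · funext j; fin_cases j <;> norm_num
    · rintro ⟨y, t, s, ht, hts, rfl⟩
      set b := Real.log (t / δ) with hb
      have hE : Real.exp b = t / δ := Real.exp_log (sign_div_pos ht)
      have hδt : δ * Real.exp b = t := by rw [hE]; field_simp
      have hσs : σ * Real.exp b = s := by rw [hE]; field_simp; linarith [hts]
      refine ⟨b, (y - β) / Sg b, fun h => absurd h.2.1 hδ, ?_⟩
      funext j; fin_cases j <;> simp [hδt, hσs, Sg_cancel]
  -- Case 5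
  · intro hγ hδ hσ; subst hδ; subst hσ
    ext p
    simp only [mem_orbit_iff, Set.mem_setOf_eq]
    constructor
    · rintro ⟨b, c, hc, rfl⟩
      refine ⟨α + γ - γ * Real.exp b, β + Sg b * c, γ * Real.exp b, ?_, by ring, ?_⟩
      · have h1 : γ * (γ * Real.exp b) = (γ * γ) * Real.exp b := by ring
        rw [h1]; exact mul_pos (mul_self_pos.mpr hγ) (Real.exp_pos b)
      · funext j; fin_cases j <;> norm_num
    · rintro ⟨x, y, z, hz, hx, rfl⟩
      set b := Real.log (z / γ) with hb
      have hE : Real.exp b = z / γ := Real.exp_log (sign_div_pos hz)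
      have hγz : γ * Real.exp b = z := by rw [hE]; field_simp
      refine ⟨b, (y - β) / Sg b, fun h => absurd h.1 hγ, ?_⟩
      funext j; fin_cases j <;> simp [hγz, Sg_cancel, hx]
  -- Case 6
  · intro hγ hδ hσ; subst hδ
    ext p
    simp only [mem_orbit_iff, Set.mem_setOf_eq]
    constructor
    · rintro ⟨b, c, hc, rfl⟩
      refine ⟨α + γ - γ * Real.exp b, β + Sg b * c, γ * Real.exp b, σ * Real.exp b, ?_, by ring, ?_, ?_⟩
      · have h1 : σ * (σ * Real.exp b) = (σ * σ) * Real.exp b := by ring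
        rw [h1]; exact mul_pos (mul_self_pos.mpr hσ) (Real.exp_pos b)
      · have hsσ : σ * Real.exp b / σ = Real.exp b := by field_simp
        rw [hsσ]; ring
      · funext j; fin_cases j <;> norm_num
    · rintro ⟨x, y, z, s, hs, hx1, hx2, rfl⟩
      set b := Real.log (s / σ) with hb
      have hE : Real.exp b = s / σ := Real.exp_log (sign_div_pos hs)
      have hσs : σ * Real.exp b = s := by rw [hE]; field_simp
      have hz : z = γ * (s / σ) := by
        have h1 : z = α + γ - x := by linarith
        rw [h1, hx2]; ring
      have hγz : γ * Real.exp b = z := by rw [hE, hz]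
      refine ⟨b, (y - β) / Sg b, fun h => absurd h.1 hγ, ?_⟩
      funext j; fin_cases j <;> simp [hγz, hσs, Sg_cancel, hx1]
  -- Case 7
  · intro hγ hδ hσ; subst hσ
    ext p
    simp only [mem_orbit_iff, Set.mem_setOf_eq]
    constructor
    · rintro ⟨b, c, hc, rfl⟩
      refine ⟨α + γ - γ * Real.exp b, β + Sg b * c, γ * Real.exp b, δ * Real.exp b, ?_, by ring, ?_, ?_⟩
      · have h1 : δ * (δ * Real.exp b) = (δ * δ) * Real.exp b := by ring
        rw [h1]; exact mul_pos (mul_self_pos.mpr hδ) (Real.exp_pos b)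
      · field_simp
      · funext j; fin_cases j <;> norm_num
    · rintro ⟨x, y, z, t, ht, hx1, hz, rfl⟩
      set b := Real.log (t / δ) with hb
      have hE : Real.exp b = t / δ := Real.exp_log (sign_div_pos ht)
      have hδt : δ * Real.exp b = t := by rw [hE]; field_simp
      have hγz : γ * Real.exp b = z := by rw [hE, hz]; ring
      refine ⟨b, (y - β) / Sg b, fun h => absurd h.1 hγ, ?_⟩
      funext j; fin_cases j <;> simp [hγz, hδt, Sg_cancel, hx1]
  -- Case 8
  · intro hγ hδ hσ
    ext p
    simp only [mem_orbit_iff, Set.mem_setOf_eq]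
    constructor
    · rintro ⟨b, c, hc, rfl⟩
      refine ⟨α + γ - γ * Real.exp b, β + Sg b * c, γ * Real.exp b, δ * Real.exp b, σ * Real.exp b, ?_, by ring, ?_, by ring, ?_⟩
      · have h1 : δ * (δ * Real.exp b) = (δ * δ) * Real.exp b := by ring
        rw [h1]; exact mul_pos (mul_self_pos.mpr hδ) (Real.exp_pos b)
      · have hsσ : σ * Real.exp b / σ = Real.exp b := by field_simp
        rw [hsσ]; ring
      · funext j; fin_cases j <;> norm_num
    · rintro ⟨x, y, z, t, s, ht, hx1, hx2, hts, rfl⟩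
      set b := Real.log (t / δ) with hb
      have hE : Real.exp b = t / δ := Real.exp_log (sign_div_pos ht)
      have hδt : δ * Real.exp b = t := by rw [hE]; field_simp
      have hσs : σ * Real.exp b = s := by rw [hE]; field_simp; linarith [hts]
      have hz : z = γ * (s / σ) := by
        have h1 : z = α + γ - x := by linarith
        rw [h1, hx2]; ring
      have hγz : γ * Real.exp b = z := by
        have hts' : t / δ = s / σ := by field_simp; linarith [hts]
        rw [hE, hts', hz]
      refine ⟨b, (y - β) / Sg b, fun h => absurd h.1 hγ, ?_⟩
      funext j; fin_cases j <;> simp [hγz, hδt, hσs, Sg_cancel, hx1]
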